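/- Let k ≥ 4 and let V be a finite set with |V| = k + 1. Suppose that for every subset F ⊆ V with |F| = k a cyclic arrangement π_F of F is given, and that for every two distinct such subsets F, F' the cyclic arrangements π_F and π_{F'} are compatible. Then there exists a cyclic arrangement π of V whose first-return map on every k-element subset F of V equals π_F; in particular π is compatible with every π_F. -/

import Mathlib

/-- A permutation `σ` of `α` is a cyclic arrangement of a finite set `S` if it fixes
every point outside `S` and acts on `S` as a single cycle. -/
def IsCyclicArrangement {α : Type*} (S : Finset α) (σ : Equiv.Perm α) : Prop :=
  (∀ a ∉ S, σ a = a) ∧ ∀ a ∈ S, ∀ b ∈ S, ∃ m : ℕ, (σ ^ m) a = b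

/-- `π` is the first-return map of `ρ` on `A`: it fixes points outside `A` and sends
each `a ∈ A` to `ρ^[m] a` for the least `m ≥ 1` with `ρ^[m] a ∈ A`. -/
def IsFirstReturnMap {α : Type*} (ρ : Equiv.Perm α) (A : Finset α)
    (π : Equiv.Perm α) : Prop :=
  (∀ a ∉ A, π a = a) ∧
    ∀ a ∈ A, ∃ m : ℕ, 0 < m ∧ (ρ ^ m) a ∈ A ∧
      (∀ j, 0 < j → j < m → (ρ ^ j) a ∉ A) ∧ π a = (ρ ^ m) a

/-- Cyclic arrangements `σ` of `A` and `τ` of `B` are compatible if some cyclic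
arrangement of `A ∪ B` has first-return map `σ` on `A` and `τ` on `B`. -/
def CyclicCompatible {α : Type*} [DecidableEq α] (A B : Finset α)
    (σ τ : Equiv.Perm α) : Prop :=
  ∃ ρ : Equiv.Perm α, IsCyclicArrangement (A ∪ B) ρ ∧
    IsFirstReturnMap ρ A σ ∧ IsFirstReturnMap ρ B τ

set_option linter.unusedSectionVars false
set_option linter.unusedVariables false
namespace Stmt3
variable {α : Type*} [DecidableEq α]
open Equiv Finset

/-- delete the point `z` from a cyclic arrangement -/
def del (z : α) (σ : Equiv.Perm α) : Equiv.Perm α := Equiv.swap z (σ z) * σ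

lemma cyc_apply_mem {S : Finset α} {ρ : Equiv.Perm α} (h : IsCyclicArrangement S ρ)
    {a : α} (ha : a ∈ S) : ρ a ∈ S := by
  by_contra hb
  have h1 : ρ (ρ a) = ρ a := h.1 _ hb
  have h2 : ρ a = a := ρ.injective h1
  rw [h2] at hb; exact hb ha

lemma cyc_pow_mem {S : Finset α} {ρ : Equiv.Perm α} (h : IsCyclicArrangement S ρ)
    {a : α} (ha : a ∈ S) (n : ℕ) : (ρ ^ n) a ∈ S := by
  induction n with
  | zero => simpa using ha
  | succ n ih => rw [pow_succ', Equiv.Perm.mul_apply]; exact cyc_apply_mem h ih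

lemma cyc_apply_ne {S : Finset α} {ρ : Equiv.Perm α} (h : IsCyclicArrangement S ρ)
    (h2 : 2 ≤ S.card) {a : α} (ha : a ∈ S) : ρ a ≠ a := by
  intro hfix
  obtain ⟨b, hb, hba⟩ := Finset.exists_mem_ne (show 1 < S.card by omega) a
  obtain ⟨m, hm⟩ := h.2 a ha b hb
  have : ∀ n : ℕ, (ρ ^ n) a = a := by
    intro n
    induction n with
    | zero => simp
    | succ n ih => rw [pow_succ, Equiv.Perm.mul_apply, hfix, ih]
  rw [this m] at hm; exact hba hm.symm

lemma frm_unique {ρ π₁ π₂ : Equiv.Perm α} {A : Finset α}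
    (h₁ : IsFirstReturnMap ρ A π₁) (h₂ : IsFirstReturnMap ρ A π₂) : π₁ = π₂ := by
  ext a
  by_cases ha : a ∈ A
  · obtain ⟨m₁, hm₁, hmem₁, hmin₁, hv₁⟩ := h₁.2 a ha
    obtain ⟨m₂, hm₂, hmem₂, hmin₂, hv₂⟩ := h₂.2 a ha
    have : m₁ = m₂ := by
      rcases lt_trichotomy m₁ m₂ with h | h | h
      · exact absurd hmem₁ (hmin₂ m₁ hm₁ h)
      · exact h
      · exact absurd hmem₂ (hmin₁ m₂ hm₂ h)
    rw [hv₁, hv₂, this]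
  · rw [h₁.1 a ha, h₂.1 a ha]

lemma frm_del {S : Finset α} {σ : Equiv.Perm α} (h : IsCyclicArrangement S σ)
    (h2 : 2 ≤ S.card) {z : α} (hz : z ∈ S) :
    IsFirstReturnMap σ (S.erase z) (del z σ) := by
  constructor
  · intro a ha
    rcases eq_or_ne a z with rfl | haz
    · show (Equiv.swap a (σ a)) (σ a) = a
      exact Equiv.swap_apply_right _ _
    · have haS : a ∉ S := fun h' => ha (Finset.mem_erase.mpr ⟨haz, h'⟩)
      show (Equiv.swap z (σ z)) (σ a) = a
      rw [h.1 a haS]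
      exact Equiv.swap_apply_of_ne_of_ne haz (fun h' => haS (h' ▸ cyc_apply_mem h hz))
  · intro a ha
    rw [Finset.mem_erase] at ha
    by_cases hza : σ a = z
    · refine ⟨2, by norm_num, ?_, ?_, ?_⟩
      · rw [pow_two, Equiv.Perm.mul_apply, hza]
        exact Finset.mem_erase.mpr ⟨cyc_apply_ne h h2 hz, cyc_apply_mem h hz⟩
      · intro j hj1 hj2
        have : j = 1 := by omega
        subst this
        simp only [pow_one, hza]
        exact fun h' => (Finset.mem_erase.mp h').1 rfl
      · show (Equiv.swap z (σ z)) (σ a) = _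
        rw [hza, Equiv.swap_apply_left, pow_two, Equiv.Perm.mul_apply, hza]
    · refine ⟨1, one_pos, ?_, by omega, ?_⟩
      · simp only [pow_one]
        exact Finset.mem_erase.mpr ⟨hza, cyc_apply_mem h ha.2⟩
      · show (Equiv.swap z (σ z)) (σ a) = (σ ^ 1) a
        rw [pow_one]
        exact Equiv.swap_apply_of_ne_of_ne hza (fun h' => ha.1 (σ.injective h'))

lemma frm_apply_mem {ρ π : Equiv.Perm α} {A : Finset α}
    (h : IsFirstReturnMap ρ A π) {a : α} (ha : a ∈ A) : π a ∈ A := by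
  obtain ⟨m, _, hmem, _, hv⟩ := h.2 a ha
  rw [hv]; exact hmem

lemma frm_pow_mem {ρ π : Equiv.Perm α} {A : Finset α}
    (h : IsFirstReturnMap ρ A π) {a : α} (ha : a ∈ A) (n : ℕ) : (π ^ n) a ∈ A := by
  induction n with
  | zero => simpa using ha
  | succ n ih => rw [pow_succ', Equiv.Perm.mul_apply]; exact frm_apply_mem h ih

lemma frm_cyclic {S A : Finset α} {ρ π : Equiv.Perm α} (hρ : IsCyclicArrangement S ρ)
    (hA : A ⊆ S) (hπ : IsFirstReturnMap ρ A π) : IsCyclicArrangement A π := by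
  constructor
  · exact hπ.1
  · have key : ∀ n : ℕ, ∀ a ∈ A, (ρ ^ n) a ∈ A → ∃ m : ℕ, (π ^ m) a = (ρ ^ n) a := by
      intro n
      induction n using Nat.strong_induction_on with
      | _ n ih =>
        intro a ha hn
        rcases Nat.eq_zero_or_pos n with rfl | hpos
        · exact ⟨0, by simp⟩
        · obtain ⟨d, hd, hdmem, hdmin, hdv⟩ := hπ.2 a ha
          have hdn : d ≤ n := by
            by_contra hlt
            push_neg at hlt
            exact hdmin n hpos hlt hn
          have hrest : (ρ ^ (n - d)) ((ρ ^ d) a) = (ρ ^ n) a := by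
            rw [← Equiv.Perm.mul_apply, ← pow_add, Nat.sub_add_cancel hdn]
          rcases Nat.eq_zero_or_pos (n - d) with hz | hpos'
          · refine ⟨1, ?_⟩
            rw [pow_one, hdv]
            rw [hz] at hrest
            simpa using hrest
          · obtain ⟨m, hm⟩ := ih (n - d) (by omega) ((ρ ^ d) a) hdmem (by rw [hrest]; exact hn)
            refine ⟨m + 1, ?_⟩
            rw [pow_succ, Equiv.Perm.mul_apply, hdv, hm, hrest]
    intro a ha b hb
    obtain ⟨n, hn⟩ := hρ.2 a (hA ha) b (hA hb)
    obtain ⟨m, hm⟩ := key n a ha (by rw [hn]; exact hb)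
    exact ⟨m, by rw [hm, hn]⟩

/-- return times: every `A`-visit of the `ρ`-orbit up to the `m`-th return is a
`π`-iterate. -/
lemma ret' {A : Finset α} {ρ π : Equiv.Perm α} (hπ : IsFirstReturnMap ρ A π)
    {a : α} (ha : a ∈ A) (m : ℕ) :
    ∃ n : ℕ, (π ^ m) a = (ρ ^ n) a ∧
      ∀ j, 0 < j → j ≤ n → (ρ ^ j) a ∈ A → ∃ i, 0 < i ∧ i ≤ m ∧ (π ^ i) a = (ρ ^ j) a := by
  induction m with
  | zero => exact ⟨0, by simp, fun j hj hj' _ => absurd hj' (by omega)⟩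
  | succ m ihm =>
    obtain ⟨n, hn, hcl⟩ := ihm
    have hb : (π ^ m) a ∈ A := frm_pow_mem hπ ha m
    obtain ⟨d, hd, hdmem, hdmin, hdv⟩ := hπ.2 _ hb
    have hstep : (π ^ (m + 1)) a = (ρ ^ (n + d)) a := by
      rw [pow_succ', Equiv.Perm.mul_apply, hdv, hn, ← Equiv.Perm.mul_apply, ← pow_add,
        add_comm d n]
    refine ⟨n + d, hstep, ?_⟩
    intro j hj hjle hjA
    rcases le_or_gt j n with hle | hgt
    · obtain ⟨i, hi1, hi2, hi3⟩ := hcl j hj hle hjA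
      exact ⟨i, hi1, by omega, hi3⟩
    · rcases eq_or_lt_of_le hjle with rfl | hlt
      · exact ⟨m + 1, by omega, le_refl _, hstep⟩
      · exfalso
        have hnot := hdmin (j - n) (by omega) (by omega)
        rw [hn, ← Equiv.Perm.mul_apply, ← pow_add] at hnot
        have hje : j - n + n = j := by omega
        rw [hje] at hnot
        exact hnot hjA

/-- `u` occurs strictly before `v` in the forward orbit of `a`. -/
def Btw (ρ : Equiv.Perm α) (a u v : α) : Prop :=
  ∃ n, 0 < n ∧ (ρ ^ n) a = u ∧ ∀ j, 0 < j → j < n → (ρ ^ j) a ≠ u ∧ (ρ ^ j) a ≠ v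

lemma btw_asymm {ρ : Equiv.Perm α} {a u v : α} (huv : u ≠ v)
    (h1 : Btw ρ a u v) (h2 : Btw ρ a v u) : False := by
  obtain ⟨n₁, hn₁, he₁, hm₁⟩ := h1
  obtain ⟨n₂, hn₂, he₂, hm₂⟩ := h2
  rcases lt_trichotomy n₁ n₂ with h | h | h
  · exact (hm₂ n₁ hn₁ h).2 he₁
  · exact huv (by rw [← he₁, ← he₂, h])
  · exact (hm₁ n₂ hn₂ h).2 he₂

lemma btw_total {S : Finset α} {ρ : Equiv.Perm α} (hρ : IsCyclicArrangement S ρ)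
    {a u v : α} (ha : a ∈ S) (hu : u ∈ S) (hv : v ∈ S)
    (hau : a ≠ u) (hav : a ≠ v) : Btw ρ a u v ∨ Btw ρ a v u := by
  have hex : ∃ n, 0 < n ∧ ((ρ ^ n) a = u ∨ (ρ ^ n) a = v) := by
    obtain ⟨m, hm⟩ := hρ.2 a ha u hu
    rcases Nat.eq_zero_or_pos m with rfl | hpos
    · simp at hm; exact absurd hm hau
    · exact ⟨m, hpos, Or.inl hm⟩
  classical
  let n₀ := Nat.find hex
  obtain ⟨hn₀pos, hn₀⟩ := Nat.find_spec hex
  have hmin : ∀ j, 0 < j → j < n₀ → (ρ ^ j) a ≠ u ∧ (ρ ^ j) a ≠ v := by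
    intro j hj hjlt
    have := Nat.find_min hex hjlt
    push_neg at this
    exact this hj
  rcases hn₀ with h | h
  · exact Or.inl ⟨n₀, hn₀pos, h, hmin⟩
  · exact Or.inr ⟨n₀, hn₀pos, h, fun j hj hjlt => (hmin j hj hjlt).symm⟩

lemma btw_frm_mp {S A : Finset α} {ρ π : Equiv.Perm α} (hρ : IsCyclicArrangement S ρ)
    (hA : A ⊆ S) (hπ : IsFirstReturnMap ρ A π) {a u v : α}
    (ha : a ∈ A) (hu : u ∈ A) (hv : v ∈ A) (hau : a ≠ u) (huv : u ≠ v)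
    (h : Btw π a u v) : Btw ρ a u v := by
  obtain ⟨m, hm, hme, hmm⟩ := h
  obtain ⟨n, hn, hcl⟩ := ret' hπ ha m
  rw [hme] at hn
  have hex : ∃ j, 0 < j ∧ ((ρ ^ j) a = u ∨ (ρ ^ j) a = v) := by
    refine ⟨n, ?_, Or.inl hn.symm⟩
    rcases Nat.eq_zero_or_pos n with rfl | h'
    · exact absurd (by simpa using hn) (Ne.symm hau)
    · exact h'
  classical
  obtain ⟨hpos, hor⟩ := Nat.find_spec hex
  have hminlt : Nat.find hex ≤ n := by
    apply Nat.find_le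
    refine ⟨?_, Or.inl hn.symm⟩
    rcases Nat.eq_zero_or_pos n with rfl | h'
    · exact absurd (by simpa using hn) (Ne.symm hau)
    · exact h'
  have hmin : ∀ j, 0 < j → j < Nat.find hex → (ρ ^ j) a ≠ u ∧ (ρ ^ j) a ≠ v := by
    intro j hj hjlt
    have := Nat.find_min hex hjlt
    push_neg at this
    exact this hj
  rcases hor with he | he
  · exact ⟨Nat.find hex, hpos, he, hmin⟩
  · exfalso
    have hmem : (ρ ^ Nat.find hex) a ∈ A := by rw [he]; exact hv
    obtain ⟨i, hi0, him, hie⟩ := hcl _ hpos hminlt hmem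
    rw [he] at hie
    rcases eq_or_lt_of_le him with rfl | hilt
    · rw [hme] at hie; exact huv hie
    · exact (hmm i hi0 hilt).2 hie

lemma btw_frm {S A : Finset α} {ρ π : Equiv.Perm α} (hρ : IsCyclicArrangement S ρ)
    (hA : A ⊆ S) (hπ : IsFirstReturnMap ρ A π) {a u v : α}
    (ha : a ∈ A) (hu : u ∈ A) (hv : v ∈ A) (hau : a ≠ u) (hav : a ≠ v) (huv : u ≠ v) :
    Btw π a u v ↔ Btw ρ a u v := by
  constructor
  · exact btw_frm_mp hρ hA hπ ha hu hv hau huv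
  · intro h
    have hπc : IsCyclicArrangement A π := frm_cyclic hρ hA hπ
    rcases btw_total hπc ha hu hv hau hav with h' | h'
    · exact h'
    · exact absurd h (fun hh => btw_asymm huv hh
        (btw_frm_mp hρ hA hπ ha hv hu hav (Ne.symm huv) h'))

lemma del_cyclic {S : Finset α} {σ : Equiv.Perm α} (h : IsCyclicArrangement S σ)
    (h2 : 2 ≤ S.card) {z : α} (hz : z ∈ S) :
    IsCyclicArrangement (S.erase z) (del z σ) :=
  frm_cyclic h (Finset.erase_subset _ _) (frm_del h h2 hz)

lemma btw_del {S : Finset α} {σ : Equiv.Perm α} (h : IsCyclicArrangement S σ)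
    (h2 : 2 ≤ S.card) {z : α} (hz : z ∈ S) {a u v : α}
    (ha : a ∈ S) (hu : u ∈ S) (hv : v ∈ S) (haz : a ≠ z) (huz : u ≠ z) (hvz : v ≠ z)
    (hau : a ≠ u) (hav : a ≠ v) (huv : u ≠ v) :
    Btw (del z σ) a u v ↔ Btw σ a u v :=
  btw_frm h (Finset.erase_subset _ _) (frm_del h h2 hz)
    (Finset.mem_erase.mpr ⟨haz, ha⟩) (Finset.mem_erase.mpr ⟨huz, hu⟩)
    (Finset.mem_erase.mpr ⟨hvz, hv⟩) hau hav huv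

lemma perm_ext_of_btw {S : Finset α} {σ τ : Equiv.Perm α}
    (hσ : IsCyclicArrangement S σ) (hτ : IsCyclicArrangement S τ) (h2 : 2 ≤ S.card)
    (h : ∀ a ∈ S, ∀ u ∈ S, ∀ v ∈ S, a ≠ u → a ≠ v → u ≠ v → (Btw σ a u v ↔ Btw τ a u v)) :
    σ = τ := by
  ext a
  by_cases ha : a ∈ S
  · by_contra hne
    have hu : σ a ∈ S := cyc_apply_mem hσ ha
    have hv : τ a ∈ S := cyc_apply_mem hτ ha
    have hau : a ≠ σ a := (cyc_apply_ne hσ h2 ha).symm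
    have hav : a ≠ τ a := (cyc_apply_ne hτ h2 ha).symm
    have hb : Btw σ a (σ a) (τ a) := ⟨1, one_pos, by simp, fun j hj hjl => absurd hj (by omega)⟩
    rw [h a ha _ hu _ hv hau hav hne] at hb
    obtain ⟨n, hn, hne', hmin⟩ := hb
    rcases eq_or_lt_of_le (show 1 ≤ n from hn) with h1 | h1
    · rw [← h1] at hne'; simp at hne'; exact hne hne'.symm
    · exact (hmin 1 one_pos h1).2 (by simp)
  · rw [hσ.1 a ha, hτ.1 a ha]

lemma conj_pow' (g ρ : Equiv.Perm α) (n : ℕ) :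
    (g * ρ * g⁻¹) ^ n = g * ρ ^ n * g⁻¹ := by
  induction n with
  | zero => simp
  | succ n ih => rw [pow_succ, ih, pow_succ]; group

lemma btw_conj {g ρ : Equiv.Perm α} {a u v : α} :
    Btw (g * ρ * g⁻¹) a u v ↔ Btw ρ (g⁻¹ a) (g⁻¹ u) (g⁻¹ v) := by
  unfold Btw
  have key : ∀ n : ℕ, ∀ w : α, ((g * ρ * g⁻¹) ^ n) a = w ↔ (ρ ^ n) (g⁻¹ a) = g⁻¹ w := by
    intro n w
    rw [conj_pow']
    constructor
    · intro h
      rw [← h]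
      simp [Equiv.Perm.mul_apply]
    · intro h
      have := congrArg g h
      simpa [Equiv.Perm.mul_apply] using this
  constructor
  · rintro ⟨n, hn, he, hm⟩
    exact ⟨n, hn, (key n u).mp he, fun j hj hjl =>
      ⟨fun hh => (hm j hj hjl).1 ((key j u).mpr hh), fun hh => (hm j hj hjl).2 ((key j v).mpr hh)⟩⟩
  · rintro ⟨n, hn, he, hm⟩
    exact ⟨n, hn, (key n u).mpr he, fun j hj hjl =>
      ⟨fun hh => (hm j hj hjl).1 ((key j u).mp hh), fun hh => (hm j hj hjl).2 ((key j v).mp hh)⟩⟩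

lemma cyc_conj {S : Finset α} {ρ : Equiv.Perm α} (h : IsCyclicArrangement S ρ)
    {x y : α} (hx : x ∈ S) (hy : y ∈ S) :
    IsCyclicArrangement S (Equiv.swap x y * ρ * Equiv.swap x y) := by
  constructor
  · intro a ha
    have hax : a ≠ x := fun h' => ha (h' ▸ hx)
    have hay : a ≠ y := fun h' => ha (h' ▸ hy)
    simp only [Equiv.Perm.mul_apply]
    rw [Equiv.swap_apply_of_ne_of_ne hax hay, h.1 a ha,
      Equiv.swap_apply_of_ne_of_ne hax hay]
  · intro a ha b hb
    have hsa : Equiv.swap x y a ∈ S := by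
      rcases eq_or_ne a x with rfl | h1
      · rw [Equiv.swap_apply_left]; exact hy
      · rcases eq_or_ne a y with rfl | h2
        · rw [Equiv.swap_apply_right]; exact hx
        · rw [Equiv.swap_apply_of_ne_of_ne h1 h2]; exact ha
    have hsb : Equiv.swap x y b ∈ S := by
      rcases eq_or_ne b x with rfl | h1
      · rw [Equiv.swap_apply_left]; exact hy
      · rcases eq_or_ne b y with rfl | h2
        · rw [Equiv.swap_apply_right]; exact hx
        · rw [Equiv.swap_apply_of_ne_of_ne h1 h2]; exact hb
    obtain ⟨m, hm⟩ := h.2 _ hsa _ hsb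
    refine ⟨m, ?_⟩
    have : Equiv.swap x y * ρ * Equiv.swap x y = Equiv.swap x y * ρ * (Equiv.swap x y)⁻¹ := by
      rw [Equiv.swap_inv]
    rw [this, conj_pow']
    simp only [Equiv.Perm.mul_apply]
    rw [Equiv.swap_inv, hm, Equiv.swap_apply_self]

lemma lemL {D : Equiv.Perm α} {x y : α} (h : D y = x) :
    Equiv.swap x (D x) * D = D * Equiv.swap x y := by
  ext a
  simp only [Equiv.Perm.mul_apply]
  rcases eq_or_ne a x with rfl | hax
  · rw [Equiv.swap_apply_right, Equiv.swap_apply_left, h]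
  · rcases eq_or_ne a y with rfl | hay
    · rw [h, Equiv.swap_apply_left, Equiv.swap_apply_right]
    · rw [Equiv.swap_apply_of_ne_of_ne hax hay,
        Equiv.swap_apply_of_ne_of_ne (fun h' => hay (D.injective (h'.trans h.symm)))
          (fun h' => hax (D.injective h'))]

lemma two_del {S : Finset α} {D E : Equiv.Perm α} (hD : IsCyclicArrangement S D)
    (hE : IsCyclicArrangement S E) (h2 : 2 ≤ S.card) {x y : α}
    (hx : x ∈ S) (hy : y ∈ S) (hxy : x ≠ y)
    (hdx : del x E = del x D) (hdy : del y E = del y D) :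
    E = D ∨ E = Equiv.swap x y * D * Equiv.swap x y := by
  have hDxne : D x ≠ x := cyc_apply_ne hD h2 hx
  have hExne : E x ≠ x := cyc_apply_ne hE h2 hx
  have hDyne : D y ≠ y := cyc_apply_ne hD h2 hy
  have hEyne : E y ≠ y := cyc_apply_ne hE h2 hy
  unfold del at hdx hdy
  by_cases hexd : E x = D x
  · left
    rw [hexd] at hdx
    exact mul_left_cancel hdx
  · right
    have e1 : E = Equiv.swap x (E x) * Equiv.swap x (D x) * D := by
      rw [mul_assoc, ← hdx, ← mul_assoc, Equiv.swap_mul_self, one_mul]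
    have e2 : E = Equiv.swap y (E y) * Equiv.swap y (D y) * D := by
      rw [mul_assoc, ← hdy, ← mul_assoc, Equiv.swap_mul_self, one_mul]
    have hcc : Equiv.swap x (E x) * Equiv.swap x (D x)
        = Equiv.swap y (E y) * Equiv.swap y (D y) :=
      mul_right_cancel (e1.symm.trans e2)
    have cx : (Equiv.swap x (E x) * Equiv.swap x (D x)) x = D x := by
      rw [Equiv.Perm.mul_apply, Equiv.swap_apply_left,
        Equiv.swap_apply_of_ne_of_ne hDxne (fun h => hexd h.symm)]
    have cEx : (Equiv.swap x (E x) * Equiv.swap x (D x)) (E x) = x := by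
      rw [Equiv.Perm.mul_apply, Equiv.swap_apply_of_ne_of_ne hExne hexd,
        Equiv.swap_apply_right]
    have heyd : E y ≠ D y := by
      intro h
      rw [h, Equiv.swap_mul_self] at hcc
      have := congrArg (fun p : Equiv.Perm α => p x) (hcc)
      simp only [Equiv.Perm.one_apply] at this
      rw [cx] at this
      exact hDxne this
    have cx' : (Equiv.swap y (E y) * Equiv.swap y (D y)) x = D x := by rw [← hcc]; exact cx
    have cEx' : (Equiv.swap y (E y) * Equiv.swap y (D y)) (E x) = x := by
      rw [← hcc]; exact cEx
    have dyv : (Equiv.swap y (E y) * Equiv.swap y (D y)) y = D y := by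
      rw [Equiv.Perm.mul_apply, Equiv.swap_apply_left,
        Equiv.swap_apply_of_ne_of_ne hDyne (fun h => heyd h.symm)]
    have hxmem : x = D y ∨ x = E y := by
      by_contra hcon
      push_neg at hcon
      have hfix : (Equiv.swap y (E y) * Equiv.swap y (D y)) x = x := by
        rw [Equiv.Perm.mul_apply, Equiv.swap_apply_of_ne_of_ne hxy hcon.1,
          Equiv.swap_apply_of_ne_of_ne hxy hcon.2]
      rw [hfix] at cx'
      exact hDxne cx'.symm
    rcases hxmem with hxDy | hxEy
    · -- x = D y : adjacent, E = swap x y * D * swap x y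
      have dDy : (Equiv.swap y (E y) * Equiv.swap y (D y)) (D y) = E y := by
        rw [Equiv.Perm.mul_apply, Equiv.swap_apply_right, Equiv.swap_apply_left]
      have hEx_y : E x = y := by
        apply Equiv.injective (Equiv.swap y (E y) * Equiv.swap y (D y))
        rw [cEx', dyv, ← hxDy]
      have hLL : Equiv.swap x (D x) * D = D * Equiv.swap x y := lemL hxDy.symm
      rw [e1, hEx_y, mul_assoc, hLL, ← mul_assoc]
    · -- x = E y
      have hxDy : x ≠ D y := by
        intro h
        exact heyd (by rw [← hxEy, h])
      have dEy : (Equiv.swap y (E y) * Equiv.swap y (D y)) (E y) = y := by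
        rw [Equiv.Perm.mul_apply, Equiv.swap_apply_of_ne_of_ne hEyne heyd,
          Equiv.swap_apply_right]
      have factC : D x = y := by
        have h1 : (Equiv.swap y (E y) * Equiv.swap y (D y)) x = y := by
          rw [hxEy]; exact dEy
        rw [h1] at cx'
        exact cx'.symm
      have cyv : (Equiv.swap x (E x) * Equiv.swap x (D x)) y = E x := by
        rw [Equiv.Perm.mul_apply, ← factC, Equiv.swap_apply_right, Equiv.swap_apply_left]
      have hLE : Equiv.swap x (E x) * E = E * Equiv.swap x y := lemL hxEy.symm
      have hmain : Equiv.swap x y * D = E * Equiv.swap x y := by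
        rw [← hLE, hdx, factC]
      calc E = E * (Equiv.swap x y * Equiv.swap x y) := by
              rw [Equiv.swap_mul_self, mul_one]
        _ = E * Equiv.swap x y * Equiv.swap x y := by rw [mul_assoc]
        _ = Equiv.swap x y * D * Equiv.swap x y := by rw [← hmain]

lemma del_conj {ρ : Equiv.Perm α} {x y z : α} (hzx : z ≠ x) (hzy : z ≠ y) :
    del z (Equiv.swap x y * ρ * Equiv.swap x y)
      = Equiv.swap x y * del z ρ * Equiv.swap x y := by
  unfold del
  have hz : (Equiv.swap x y * ρ * Equiv.swap x y) z
      = (Equiv.swap x y) (ρ z) := by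
    simp only [Equiv.Perm.mul_apply]
    rw [Equiv.swap_apply_of_ne_of_ne hzx hzy]
  rw [hz]
  have key := Equiv.swap_apply_apply (Equiv.swap x y) z (ρ z)
  rw [Equiv.swap_apply_of_ne_of_ne hzx hzy, Equiv.swap_inv] at key
  rw [key]
  simp only [mul_assoc]
  rw [← mul_assoc (Equiv.swap x y) (Equiv.swap x y) (ρ * Equiv.swap x y),
    Equiv.swap_mul_self, one_mul]

lemma exists_not_mem4 {V : Finset α} (h : 5 ≤ V.card) (a b c d : α) :
    ∃ u ∈ V, u ≠ a ∧ u ≠ b ∧ u ≠ c ∧ u ≠ d := by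
  by_contra hcon
  push_neg at hcon
  have hsub : V ⊆ {a, b, c, d} := by
    intro u hu
    simp only [Finset.mem_insert, Finset.mem_singleton]
    by_contra h'
    push_neg at h'
    exact h'.2.2.2 (hcon u hu h'.1 h'.2.1 h'.2.2.1)
  have h1 := Finset.card_le_card hsub
  have h4 : ({a, b, c, d} : Finset α).card ≤ 4 := by
    apply le_trans (Finset.card_insert_le _ _)
    have h3 : ({b, c, d} : Finset α).card ≤ 3 := by
      apply le_trans (Finset.card_insert_le _ _)
      have hc2 : ({c, d} : Finset α).card ≤ 2 :=
        le_trans (Finset.card_insert_le _ _) (by simp)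
      omega
    omega
  omega

end Stmt3

open Stmt3

/-- If pairwise compatible cyclic arrangements are given on all `k`-element subsets
of a `(k+1)`-element set `V` (with `k ≥ 4`), then there is a cyclic arrangement of
`V` whose first-return map on every `k`-element subset `F` is `π F`. -/
theorem stmt3 {α : Type*} [DecidableEq α] (k : ℕ) (hk : 4 ≤ k)
    (V : Finset α) (hV : V.card = k + 1) (π : Finset α → Equiv.Perm α)
    (hcyc : ∀ F ⊆ V, F.card = k → IsCyclicArrangement F (π F))
    (hcomp : ∀ F, F ⊆ V → ∀ F', F' ⊆ V → F.card = k → F'.card = k → F ≠ F' →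
      CyclicCompatible F F' (π F) (π F')) :
    ∃ σ : Equiv.Perm α, IsCyclicArrangement V σ ∧
      ∀ F ⊆ V, F.card = k → IsFirstReturnMap σ F (π F) := by

  classical
  have h5 : 5 ≤ V.card := by omega
  have h2V : 2 ≤ V.card := by omega
  have herase_card : ∀ z ∈ V, (V.erase z).card = k := by
    intro z hz; rw [Finset.card_erase_of_mem hz, hV]; omega
  -- translated pairwise compatibility
  have wit : ∀ x ∈ V, ∀ y ∈ V, x ≠ y → ∃ ρ : Equiv.Perm α, IsCyclicArrangement V ρ ∧
      del x ρ = π (V.erase x) ∧ del y ρ = π (V.erase y) := by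
    intro x hx y hy hxy
    have hne : V.erase x ≠ V.erase y := by
      intro h
      have hmem : y ∈ V.erase x := Finset.mem_erase.mpr ⟨Ne.symm hxy, hy⟩
      rw [h] at hmem
      exact (Finset.mem_erase.mp hmem).1 rfl
    obtain ⟨ρ, hcycU, h1, h2⟩ := hcomp _ (Finset.erase_subset _ _) _ (Finset.erase_subset _ _)
        (herase_card x hx) (herase_card y hy) hne
    have hU : V.erase x ∪ V.erase y = V := by
      apply Finset.Subset.antisymm
      · exact Finset.union_subset (Finset.erase_subset _ _) (Finset.erase_subset _ _)
      · intro a ha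
        rcases eq_or_ne a x with rfl | h'
        · exact Finset.mem_union_right _ (Finset.mem_erase.mpr ⟨hxy, ha⟩)
        · exact Finset.mem_union_left _ (Finset.mem_erase.mpr ⟨h', ha⟩)
    rw [hU] at hcycU
    exact ⟨ρ, hcycU, frm_unique (frm_del hcycU h2V hx) h1,
      frm_unique (frm_del hcycU h2V hy) h2⟩
  -- wrapping up once we have all single deletions
  have final : ∀ σ : Equiv.Perm α, IsCyclicArrangement V σ →
      (∀ z ∈ V, del z σ = π (V.erase z)) →
      ∃ σ : Equiv.Perm α, IsCyclicArrangement V σ ∧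
        ∀ F ⊆ V, F.card = k → IsFirstReturnMap σ F (π F) := by
    intro σ hσ hall
    refine ⟨σ, hσ, ?_⟩
    intro F hF hFc
    have hcard : (V \ F).card = 1 := by rw [Finset.card_sdiff_of_subset hF]; omega
    obtain ⟨z, hz⟩ := Finset.card_eq_one.mp hcard
    have hzVF : z ∈ V \ F := by rw [hz]; exact Finset.mem_singleton_self z
    have hzV : z ∈ V := (Finset.mem_sdiff.mp hzVF).1
    have hzF : z ∉ F := (Finset.mem_sdiff.mp hzVF).2
    have hFe : F = V.erase z := by
      apply Finset.eq_of_subset_of_card_le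
      · intro a haF
        exact Finset.mem_erase.mpr ⟨fun h => hzF (h ▸ haF), hF haF⟩
      · rw [Finset.card_erase_of_mem hzV, hV, hFc]; omega
    rw [hFe, ← hall z hzV]
    exact frm_del hσ h2V hzV
  -- fix two distinct points and a witness for the pair
  obtain ⟨x, hx, y, hy, hxy⟩ := Finset.one_lt_card.mp (by omega : 1 < V.card)
  obtain ⟨ρ, hρ, hρx, hρy⟩ := wit x hx y hy hxy
  -- the flipped candidate
  have hσ'c : IsCyclicArrangement V (Equiv.swap x y * ρ * Equiv.swap x y) :=
    cyc_conj hρ hx hy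
  -- step 1 : dichotomy for every z outside {x, y}
  have step1 : ∀ z ∈ V, z ≠ x → z ≠ y →
      del z ρ = π (V.erase z) ∨
      del z (Equiv.swap x y * ρ * Equiv.swap x y) = π (V.erase z) := by
    intro z hzV hzx hzy
    obtain ⟨μ, hμ, hμx, hμz⟩ := wit x hx z hzV (Ne.symm hzx)
    obtain ⟨ν, hν, hνy, hνz⟩ := wit y hy z hzV (Ne.symm hzy)
    have key : ∀ (w : α) (τ : Equiv.Perm α), w ∈ V → IsCyclicArrangement V τ →
        del w τ = del w ρ → del z τ = π (V.erase z) →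
        ∀ a u v : α, a ∈ V → u ∈ V → v ∈ V →
        a ≠ z → u ≠ z → v ≠ z → a ≠ w → u ≠ w → v ≠ w → a ≠ u → a ≠ v → u ≠ v →
        (Btw (π (V.erase z)) a u v ↔ Btw (del z ρ) a u v) := by
      intro w τ hwV hτ hτw hτz a u v haV huV hvV haz huz hvz haw huw hvw hau hav huv
      have e1 := btw_del hτ h2V hzV haV huV hvV haz huz hvz hau hav huv
      rw [hτz] at e1
      have e2 := btw_del hτ h2V hwV haV huV hvV haw huw hvw hau hav huv
      rw [hτw] at e2
      have e3 := btw_del hρ h2V hwV haV huV hvV haw huw hvw hau hav huv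
      have e4 := btw_del hρ h2V hzV haV huV hvV haz huz hvz hau hav huv
      exact e1.trans ((e2.symm.trans e3).trans e4.symm)
    have hEcyc : IsCyclicArrangement (V.erase z) (π (V.erase z)) := by
      rw [← hμz]; exact del_cyclic hμ h2V hzV
    have hDcyc : IsCyclicArrangement (V.erase z) (del z ρ) := del_cyclic hρ h2V hzV
    have h2e : 2 ≤ (V.erase z).card := by rw [Finset.card_erase_of_mem hzV]; omega
    have hxez : x ∈ V.erase z := Finset.mem_erase.mpr ⟨Ne.symm hzx, hx⟩
    have hyez : y ∈ V.erase z := Finset.mem_erase.mpr ⟨Ne.symm hzy, hy⟩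
    have hdels : ∀ (w : α) (τ : Equiv.Perm α), w ∈ V.erase z → IsCyclicArrangement V τ →
        del w τ = del w ρ → del z τ = π (V.erase z) →
        del w (π (V.erase z)) = del w (del z ρ) := by
      intro w τ hwez hτ hτw hτz
      have hwV : w ∈ V := (Finset.mem_erase.mp hwez).2
      apply perm_ext_of_btw (del_cyclic hEcyc h2e hwez) (del_cyclic hDcyc h2e hwez)
        (by rw [Finset.card_erase_of_mem hwez, Finset.card_erase_of_mem hzV]; omega)
      intro a ha u hu v hv hau hav huv
      obtain ⟨haw, haez⟩ := Finset.mem_erase.mp ha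
      obtain ⟨haz, haV⟩ := Finset.mem_erase.mp haez
      obtain ⟨huw, huez⟩ := Finset.mem_erase.mp hu
      obtain ⟨huz, huV⟩ := Finset.mem_erase.mp huez
      obtain ⟨hvw, hvez⟩ := Finset.mem_erase.mp hv
      obtain ⟨hvz, hvV⟩ := Finset.mem_erase.mp hvez
      have e1 := btw_del hEcyc h2e hwez haez huez hvez haw huw hvw hau hav huv
      have e2 := btw_del hDcyc h2e hwez haez huez hvez haw huw hvw hau hav huv
      exact e1.trans ((key w τ hwV hτ hτw hτz a u v haV huV hvV haz huz hvz haw huw hvw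
        hau hav huv).trans e2.symm)
    have hdelx : del x (π (V.erase z)) = del x (del z ρ) :=
      hdels x μ hxez hμ (hμx.trans hρx.symm) hμz
    have hdely : del y (π (V.erase z)) = del y (del z ρ) :=
      hdels y ν hyez hν (hνy.trans hρy.symm) hνz
    rcases two_del hDcyc hEcyc h2e hxez hyez hxy hdelx hdely with h | h
    · exact Or.inl h.symm
    · right
      rw [del_conj hzx hzy]
      exact h.symm
  by_cases hall : ∀ z ∈ V, del z ρ = π (V.erase z)
  · exact final ρ hρ hall
  push_neg at hall
  obtain ⟨z₀, hz₀V, hz₀bad⟩ := hall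
  have hz₀x : z₀ ≠ x := fun h => hz₀bad (by rw [h, hρx])
  have hz₀y : z₀ ≠ y := fun h => hz₀bad (by rw [h, hρy])
  have hz₀flip : del z₀ (Equiv.swap x y * ρ * Equiv.swap x y) = π (V.erase z₀) :=
    (step1 z₀ hz₀V hz₀x hz₀y).resolve_left hz₀bad
  -- every point outside {x,y} is deleted correctly by the flipped candidate
  have flipAll : ∀ w ∈ V, w ≠ x → w ≠ y →
      del w (Equiv.swap x y * ρ * Equiv.swap x y) = π (V.erase w) := by
    intro w hwV hwx hwy
    rcases eq_or_ne w z₀ with rfl | hwz₀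
    · exact hz₀flip
    rcases step1 w hwV hwx hwy with hgood | hflip
    · exfalso
      obtain ⟨u, huV, hux, huy, huz₀, huw⟩ := exists_not_mem4 h5 x y z₀ w
      obtain ⟨κ, hκ, hκz₀, hκw⟩ := wit z₀ hz₀V w hwV (Ne.symm hwz₀)
      have t1 : Btw κ u x y ↔ Btw ρ u x y := by
        have e1 := btw_del hκ h2V hwV huV hx hy huw (Ne.symm hwx) (Ne.symm hwy) hux huy hxy
        have e2 := btw_del hρ h2V hwV huV hx hy huw (Ne.symm hwx) (Ne.symm hwy) hux huy hxy
        rw [hκw, ← hgood] at e1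
        exact e1.symm.trans e2
      have t2 : Btw κ u x y ↔ Btw (Equiv.swap x y * ρ * Equiv.swap x y) u x y := by
        have e1 := btw_del hκ h2V hz₀V huV hx hy huz₀ (Ne.symm hz₀x) (Ne.symm hz₀y) hux huy hxy
        have e2 := btw_del hσ'c h2V hz₀V huV hx hy huz₀ (Ne.symm hz₀x) (Ne.symm hz₀y) hux huy hxy
        rw [hκz₀, ← hz₀flip] at e1
        exact e1.symm.trans e2
      have t3 : Btw (Equiv.swap x y * ρ * Equiv.swap x y) u x y ↔ Btw ρ u y x := by
        rw [show Equiv.swap x y * ρ * Equiv.swap x y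
            = Equiv.swap x y * ρ * (Equiv.swap x y)⁻¹ from by rw [Equiv.swap_inv]]
        rw [btw_conj, Equiv.swap_inv, Equiv.swap_apply_of_ne_of_ne hux huy,
          Equiv.swap_apply_left, Equiv.swap_apply_right]
      rcases btw_total hρ huV hx hy hux huy with hb | hb
      · exact btw_asymm hxy hb (t3.mp (t2.mp (t1.mpr hb)))
      · exact btw_asymm hxy (t1.mp (t2.mpr (t3.mpr hb))) hb
    · exact hflip
  -- the two special points
  have step3 : ∀ w₁ w₂ : α, w₁ ∈ V → w₂ ∈ V → w₁ ≠ w₂ →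
      Equiv.swap x y * ρ * Equiv.swap x y = Equiv.swap w₁ w₂ * ρ * Equiv.swap w₁ w₂ →
      (∀ w : α, w ≠ w₁ → w ≠ w₂ → w ≠ x ∧ w ≠ y) →
      del w₁ ρ = π (V.erase w₁) →
      del w₁ (Equiv.swap x y * ρ * Equiv.swap x y) = π (V.erase w₁) := by
    intro w₁ w₂ hw₁V hw₂V hw12 hconj hother hρw₁
    rw [← hρw₁]
    apply perm_ext_of_btw (del_cyclic hσ'c h2V hw₁V) (del_cyclic hρ h2V hw₁V)
      (by rw [Finset.card_erase_of_mem hw₁V]; omega)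
    intro a ha u hu v hv hau hav huv
    obtain ⟨haw₁, haV⟩ := Finset.mem_erase.mp ha
    obtain ⟨huw₁, huV⟩ := Finset.mem_erase.mp hu
    obtain ⟨hvw₁, hvV⟩ := Finset.mem_erase.mp hv
    have e1 := btw_del hσ'c h2V hw₁V haV huV hvV haw₁ huw₁ hvw₁ hau hav huv
    have e2 := btw_del hρ h2V hw₁V haV huV hvV haw₁ huw₁ hvw₁ hau hav huv
    refine e1.trans (Iff.trans ?_ e2.symm)
    by_cases hw₂T : w₂ = a ∨ w₂ = u ∨ w₂ = v
    · -- w₂ occurs in the triple: use an auxiliary witness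
      obtain ⟨w, hwV, hww₁, hwa, hwu, hwv⟩ := exists_not_mem4 h5 w₁ a u v
      have hww₂ : w ≠ w₂ := by
        rcases hw₂T with h | h | h
        · rw [h]; exact hwa
        · rw [h]; exact hwu
        · rw [h]; exact hwv
      obtain ⟨hwx, hwy⟩ := hother w hww₁ hww₂
      obtain ⟨τ, hτ, hτw₁, hτw⟩ := wit w₁ hw₁V w hwV (Ne.symm hww₁)
      have hτw' : del w τ = del w (Equiv.swap x y * ρ * Equiv.swap x y) := by
        rw [hτw, ← flipAll w hwV hwx hwy]
      have hτw₁' : del w₁ τ = del w₁ ρ := by rw [hτw₁, ← hρw₁]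
      have f1 := btw_del hσ'c h2V hwV haV huV hvV (Ne.symm hwa) (Ne.symm hwu) (Ne.symm hwv)
        hau hav huv
      have f2 := btw_del hτ h2V hwV haV huV hvV (Ne.symm hwa) (Ne.symm hwu) (Ne.symm hwv)
        hau hav huv
      have f3 := btw_del hτ h2V hw₁V haV huV hvV haw₁ huw₁ hvw₁ hau hav huv
      have f4 := btw_del hρ h2V hw₁V haV huV hvV haw₁ huw₁ hvw₁ hau hav huv
      rw [hτw'] at f2
      rw [hτw₁'] at f3
      exact (f1.symm.trans f2).trans (f3.symm.trans f4)
    · -- the triple avoids both w₁ and w₂, so conjugation does not affect it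
      push_neg at hw₂T
      have haw₂ : a ≠ w₂ := fun h => hw₂T.1 h.symm
      have huw₂ : u ≠ w₂ := fun h => hw₂T.2.1 h.symm
      have hvw₂ : v ≠ w₂ := fun h => hw₂T.2.2 h.symm
      rw [hconj]
      rw [show Equiv.swap w₁ w₂ * ρ * Equiv.swap w₁ w₂
          = Equiv.swap w₁ w₂ * ρ * (Equiv.swap w₁ w₂)⁻¹ from by rw [Equiv.swap_inv]]
      rw [btw_conj, Equiv.swap_inv, Equiv.swap_apply_of_ne_of_ne haw₁ haw₂,
        Equiv.swap_apply_of_ne_of_ne huw₁ huw₂, Equiv.swap_apply_of_ne_of_ne hvw₁ hvw₂]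
  have hfx : del x (Equiv.swap x y * ρ * Equiv.swap x y) = π (V.erase x) :=
    step3 x y hx hy hxy rfl (fun w h1 h2 => ⟨h1, h2⟩) hρx
  have hfy : del y (Equiv.swap x y * ρ * Equiv.swap x y) = π (V.erase y) :=
    step3 y x hy hx (Ne.symm hxy) (by rw [Equiv.swap_comm x y]) (fun w h1 h2 => ⟨h2, h1⟩) hρy
  apply final _ hσ'c
  intro z hzV
  rcases eq_or_ne z x with rfl | h1
  · exact hfx
  rcases eq_or_ne z y with rfl | h2
  · exact hfy
  exact flipAll z hzV h1 h2
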